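/- Let σ ∈ S_m be a permutation mapping the set {i_1,…,i_k} onto itself, and let σ' ∈ S_k be the induced permutation defined by σ'(p) = q if and only if σ(i_p) = i_q. Then for every g : S_k → ℝ^d, promotion is equivariant in the sense that (g^{(σ')})↑^{(1,…,m)} = (g↑^{(1,…,m)})^{(σ)}. -/

import Mathlib

/-- `σ ∈ S_m|_{(i_1,…,i_k)}`: the permutation `σ` of `{1,…,m}` sends each of the
first `k` positions into the set `{i_1,…,i_k}`. -/
def IsRestricted {m k : ℕ} (hkm : k ≤ m) (i : Fin k → Fin m) (σ : Equiv.Perm (Fin m)) : Prop :=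
  ∀ p : Fin k, σ (Fin.castLE hkm p) ∈ Set.range i

-- The restricted permutation `σ↓_{(i_1,…,i_k)}` as a function `{1,…,k} → {1,…,k}`:
-- `σ↓(p) = q` iff `σ(p) = i_q` (well defined when `σ` is restricted and `i` is injective).
noncomputable def restrictFun {m k : ℕ} (hk : 1 ≤ k) (hkm : k ≤ m) (i : Fin k → Fin m)
    (σ : Equiv.Perm (Fin m)) : Fin k → Fin k :=
  haveI : Nonempty (Fin k) := ⟨⟨0, hk⟩⟩
  fun p => Function.invFun i (σ (Fin.castLE hkm p))

-- The restricted permutation `σ↓_{(i_1,…,i_k)}` as an element of `S_k`.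
noncomputable def restrictPerm {m k : ℕ} (hk : 1 ≤ k) (hkm : k ≤ m) (i : Fin k → Fin m)
    (σ : Equiv.Perm (Fin m)) : Equiv.Perm (Fin k) :=
  if h : Function.Bijective (restrictFun hk hkm i σ) then Equiv.ofBijective _ h else 1

-- Narrowing: `f↓_{(i_1,…,i_k)}(ω) = (m−k)!⁻¹ · Σ_{τ restricted, τ↓ = ω} f(τ)`.
open Classical in
noncomputable def narrow {m k : ℕ} (hk : 1 ≤ k) (hkm : k ≤ m) (i : Fin k → Fin m)
    {V : Type*} [AddCommGroup V] [Module ℝ V]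
    (f : Equiv.Perm (Fin m) → V) (ω : Equiv.Perm (Fin k)) : V :=
  ((m - k).factorial : ℝ)⁻¹ •
    ∑ τ : Equiv.Perm (Fin m),
      if IsRestricted hkm i τ ∧ restrictFun hk hkm i τ = ⇑ω then f τ else 0

-- Promotion: `g↑^{(1,…,m)}(τ) = g(τ↓)` if `τ` is restricted, and `0` otherwise.
open Classical in
noncomputable def promote {m k : ℕ} (hk : 1 ≤ k) (hkm : k ≤ m) (i : Fin k → Fin m)
    {V : Type*} [AddCommGroup V] [Module ℝ V]
    (g : Equiv.Perm (Fin k) → V) (τ : Equiv.Perm (Fin m)) : V :=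
  if IsRestricted hkm i τ then g (restrictPerm hk hkm i τ) else 0

/-- Left translation: `h^{(τ)}(π) = h(τ⁻¹ π)`. -/
def lTranslate {G V : Type*} [Group G] (τ : G) (h : G → V) : G → V :=
  fun π => h (τ⁻¹ * π)

-- Promotion is equivariant: if `σ ∈ S_m` maps `{i_1,…,i_k}` onto itself and `σ' ∈ S_k`
-- is the induced permutation (`σ'(p) = q ↔ σ(i_p) = i_q`), then for every `g : S_k → ℝ^d`,
-- `(g^{(σ')})↑^{(1,…,m)} = (g↑^{(1,…,m)})^{(σ)}`.
lemma i_restrictFun {m k : ℕ} (hk : 1 ≤ k) (hkm : k ≤ m) (i : Fin k → Fin m)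
    (hi : Function.Injective i) (τ : Equiv.Perm (Fin m)) (hτ : IsRestricted hkm i τ)
    (p : Fin k) : i (restrictFun hk hkm i τ p) = τ (Fin.castLE hkm p) := by
  haveI : Nonempty (Fin k) := ⟨⟨0, hk⟩⟩
  obtain ⟨a, ha⟩ := hτ p
  rw [restrictFun, ← ha]
  exact congrArg i (Function.leftInverse_invFun hi a)

lemma restrict_bij {m k : ℕ} (hk : 1 ≤ k) (hkm : k ≤ m) (i : Fin k → Fin m)
    (hi : Function.Injective i) (τ : Equiv.Perm (Fin m)) (hτ : IsRestricted hkm i τ) :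
    Function.Bijective (restrictFun hk hkm i τ) := by
  rw [Finite.injective_iff_bijective.symm]
  intro p q hpq
  have h1 := i_restrictFun hk hkm i hi τ hτ p
  have h2 := i_restrictFun hk hkm i hi τ hτ q
  rw [hpq, h2] at h1
  have := τ.injective h1
  exact (Fin.castLE_injective hkm this).symm

theorem promote_equivariant {m k d : ℕ} (hk : 1 ≤ k) (hkm : k ≤ m)
    (i : Fin k → Fin m) (hi : Function.Injective i)
    (σ : Equiv.Perm (Fin m)) (hσ : ⇑σ '' Set.range i = Set.range i)
    (σ' : Equiv.Perm (Fin k)) (hσ' : ∀ p q : Fin k, σ' p = q ↔ σ (i p) = i q)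
    (g : Equiv.Perm (Fin k) → Fin d → ℝ) :
    promote hk hkm i (lTranslate σ' g) = lTranslate σ (promote hk hkm i g) := by
  haveI : Nonempty (Fin k) := ⟨⟨0, hk⟩⟩
  have hσi : ∀ p, σ (i p) = i (σ' p) := fun p => (hσ' p (σ' p)).mp rfl
  have hσinv : ∀ q, σ⁻¹ (i q) = i (σ'⁻¹ q) := by
    intro q
    have h := hσi (σ'⁻¹ q)
    rw [← Equiv.Perm.mul_apply, mul_inv_cancel, Equiv.Perm.one_apply] at h
    rw [← h, ← Equiv.Perm.mul_apply, inv_mul_cancel, Equiv.Perm.one_apply]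
  funext τ
  simp only [promote, lTranslate]
  by_cases hτ : IsRestricted hkm i τ
  · have hτ' : IsRestricted hkm i (σ⁻¹ * τ) := by
      intro p
      obtain ⟨q, hq⟩ := hτ p
      exact ⟨σ'⁻¹ q, by rw [Equiv.Perm.mul_apply, ← hq, hσinv]⟩
    rw [if_pos hτ, if_pos hτ']
    show g (σ'⁻¹ * restrictPerm hk hkm i τ) = g (restrictPerm hk hkm i (σ⁻¹ * τ))
    refine congrArg g ?_
    have hb := restrict_bij hk hkm i hi τ hτ
    have hb' := restrict_bij hk hkm i hi (σ⁻¹ * τ) hτ'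
    rw [restrictPerm, restrictPerm, dif_pos hb, dif_pos hb']
    refine Equiv.ext fun p => hi ?_
    rw [Equiv.Perm.mul_apply, Equiv.ofBijective_apply, Equiv.ofBijective_apply,
      ← hσinv, i_restrictFun hk hkm i hi τ hτ, i_restrictFun hk hkm i hi (σ⁻¹ * τ) hτ',
      Equiv.Perm.mul_apply]
  · have hτ' : ¬ IsRestricted hkm i (σ⁻¹ * τ) := by
      intro h
      apply hτ
      intro p
      obtain ⟨q, hq⟩ := h p
      refine ⟨σ' q, ?_⟩
      rw [← hσi, hq, Equiv.Perm.mul_apply, ← Equiv.Perm.mul_apply, mul_inv_cancel, Equiv.Perm.one_apply]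
    rw [if_neg hτ, if_neg hτ']
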